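/- arXiv:1303.4171 — 2 statements merged into one kernel-verified Lean document; each statement's English description precedes it below -/
import Mathlib

section
/- Let Λ = (Λ_1, …, Λ_n) with Λ_p ∈ (1/2)ℤ, Λ_p − Λ_{p+1} ∈ ℤ_{>0} for p = 1, …, n−1, and Λ_n > 0. For 1 ≤ k ≤ n define μ^{(k)} = (μ^{(k)}_1, …, μ^{(k)}_{n-1}) by μ^{(k)}_p = Λ_p − (2n−1−2p)/2 for p < k and μ^{(k)}_p = Λ_{p+1} − (2n−1−2p)/2 for p ≥ k. Then a tuple γ = (γ_1,…,γ_{n-1}) interlaces both μ^{(i)} and μ^{(i-1)} (in the sense that μ_p ≥ γ_p ≥ μ_{p+1} for p ≤ n−2 and μ_{n-1} ≥ |γ_{n-1}|, with integrality μ_p − γ_p ∈ ℤ) for some 2 ≤ i ≤ n if and only if γ satisfies: Λ_p − n + p + 1/2 ≥ γ_p ≥ Λ_{p+1} − n + p + 3/2 for p = 1,…,i−2; Λ_{p+1} − n + p + 1/2 ≥ γ_p ≥ Λ_{p+2} − n + p + 3/2 for p = i−1,…,n−2; and Λ_n − 1/2 ≥ |γ_{n-1}|. -/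
/-- The highest weight `μ_{0,k}` (1-indexed, with `ρ_m` subtracted) of the
`M = Spin(2n−1)`-representation `δ_{0,k}` occurring in the principal series of
`Spin(2n,1)`: `μ^{(k)}_p = Λ_p − (2n−1−2p)/2` for `p < k`, `Λ_{p+1} − (2n−1−2p)/2` for `p ≥ k`. -/
noncomputable def muWt (n : ℕ) (Λ : ℕ → ℝ) (k : ℕ) : ℕ → ℝ :=
  fun p => if p < k then Λ p - (2*(n:ℝ) - 1 - 2*p)/2 else Λ (p+1) - (2*(n:ℝ) - 1 - 2*p)/2

/-- `γ` (a `Spin(2n−2)`-weight, 1-indexed with `n−1` entries) interlaces the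
`Spin(2n−1)`-weight `μ` (with `n−1` entries), including the integrality condition. -/
def InterlacesOdd (n : ℕ) (μ γ : ℕ → ℝ) : Prop :=
  (∀ p, 1 ≤ p → p ≤ n - 2 → μ p ≥ γ p ∧ γ p ≥ μ (p+1)) ∧
  μ (n-1) ≥ |γ (n-1)| ∧
  (∀ p, 1 ≤ p → p ≤ n - 1 → ∃ z : ℤ, μ p - γ p = z)

lemma muWt_lt (n k p : ℕ) (Λ : ℕ → ℝ) (h : p < k) :
    muWt n Λ k p = Λ p - (n:ℝ) + p + 1/2 := by
  simp only [muWt, if_pos h]; ring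

lemma muWt_ge (n k p : ℕ) (Λ : ℕ → ℝ) (h : k ≤ p) :
    muWt n Λ k p = Λ (p+1) - (n:ℝ) + p + 1/2 := by
  simp only [muWt, if_neg (not_lt.2 h)]; ring

/-- Combinatorial core of Proposition 3.2: `γ` interlaces both `μ^{(i)}` and `μ^{(i-1)}`
if and only if `γ` satisfies condition (1.3) of Theorem 1.1. -/
theorem interlace_iff_condition (n : ℕ) (hn : 2 ≤ n) (Λ : ℕ → ℝ)
    (hhalf : ∀ p, 1 ≤ p → p ≤ n → ∃ z : ℤ, 2 * Λ p = z)
    (hgap : ∀ p, 1 ≤ p → p ≤ n - 1 → ∃ z : ℤ, Λ p - Λ (p+1) = z ∧ (0:ℝ) < z)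
    (hpos : 0 < Λ n)
    (γ : ℕ → ℝ) (hγ : ∀ p, 1 ≤ p → p ≤ n - 1 → ∃ z : ℤ, γ p + 1/2 - Λ 1 = z)
    (i : ℕ) (hi2 : 2 ≤ i) (hin : i ≤ n) :
    (InterlacesOdd n (muWt n Λ i) γ ∧ InterlacesOdd n (muWt n Λ (i-1)) γ) ↔
    ((∀ p, 1 ≤ p → p ≤ i - 2 →
        Λ p - n + p + 1/2 ≥ γ p ∧ γ p ≥ Λ (p+1) - n + p + 3/2) ∧
     (∀ p, i - 1 ≤ p → p ≤ n - 2 →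
        Λ (p+1) - n + p + 1/2 ≥ γ p ∧ γ p ≥ Λ (p+2) - n + p + 3/2) ∧
     Λ n - 1/2 ≥ |γ (n-1)|) := by
  have hcn : ((n-1:ℕ):ℝ) = (n:ℝ) - 1 := by
    rw [Nat.cast_sub (by omega : 1 ≤ n)]; norm_num
  have hn1 : n - 1 + 1 = n := by omega
  have hmono : ∀ p, 1 ≤ p → p ≤ n - 1 → Λ (p+1) ≤ Λ p := by
    intro p h1 h2
    obtain ⟨z, hz, hzpos⟩ := hgap p h1 h2
    linarith
  have hdiff : ∀ q, 1 ≤ q → q ≤ n → ∃ w : ℤ, Λ q - Λ 1 = w := by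
    intro q h1 h2
    induction q with
    | zero => omega
    | succ m ih =>
      rcases Nat.eq_or_lt_of_le h1 with h | h
      · exact ⟨0, by rw [← h]; simp⟩
      · obtain ⟨w, hw⟩ := ih (by omega) (by omega)
        obtain ⟨z, hz, _⟩ := hgap m (by omega) (by omega)
        exact ⟨w - z, by push_cast; linarith⟩
  have hint : ∀ k p, 1 ≤ p → p ≤ n - 1 → ∃ z : ℤ, muWt n Λ k p - γ p = z := by
    intro k p h1 h2
    obtain ⟨z, hz⟩ := hγ p h1 h2
    by_cases hpk : p < k
    · obtain ⟨w, hw⟩ := hdiff p h1 (by omega)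
      refine ⟨w - z + p + 1 - n, ?_⟩
      rw [muWt_lt n k p Λ hpk]; push_cast; linarith
    · obtain ⟨w, hw⟩ := hdiff (p+1) (by omega) (by omega)
      refine ⟨w - z + p + 1 - n, ?_⟩
      rw [muWt_ge n k p Λ (not_lt.1 hpk)]; push_cast; linarith
  constructor
  · rintro ⟨⟨ha1, hb1, -⟩, ⟨ha2, hb2, -⟩⟩
    refine ⟨?_, ?_, ?_⟩
    · intro p h1 h2
      obtain ⟨hu, hl⟩ := ha1 p h1 (by omega)
      rw [muWt_lt n i p Λ (by omega)] at hu
      rw [muWt_lt n i (p+1) Λ (by omega)] at hl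
      push_cast at hl
      exact ⟨hu, by linarith⟩
    · intro p h1 h2
      obtain ⟨hu, hl⟩ := ha2 p (by omega) h2
      rw [muWt_ge n (i-1) p Λ (by omega)] at hu
      rw [muWt_ge n (i-1) (p+1) Λ (by omega)] at hl
      rw [show p + 1 + 1 = p + 2 from rfl] at hl
      push_cast at hl
      exact ⟨hu, by linarith⟩
    · rw [muWt_ge n (i-1) (n-1) Λ (by omega), hn1, hcn] at hb2
      linarith
  · rintro ⟨c1, c2, c3⟩
    refine ⟨⟨?_, ?_, fun p h1 h2 => hint i p h1 h2⟩,
            ⟨?_, ?_, fun p h1 h2 => hint (i-1) p h1 h2⟩⟩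
    · -- pairs for μ^{(i)}
      intro p h1 h2
      by_cases hpi : p + 2 ≤ i
      · obtain ⟨hu, hl⟩ := c1 p h1 (by omega)
        rw [muWt_lt n i p Λ (by omega), muWt_lt n i (p+1) Λ (by omega)]
        push_cast
        exact ⟨hu, by linarith⟩
      · by_cases hpi2 : p + 1 = i
        · obtain ⟨hu, hl⟩ := c2 p (by omega) h2
          have hm := hmono p h1 (by omega)
          rw [muWt_lt n i p Λ (by omega), muWt_ge n i (p+1) Λ (by omega),
            show p + 1 + 1 = p + 2 from rfl]
          push_cast
          exact ⟨by linarith, by linarith⟩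
        · obtain ⟨hu, hl⟩ := c2 p (by omega) h2
          rw [muWt_ge n i p Λ (by omega), muWt_ge n i (p+1) Λ (by omega),
            show p + 1 + 1 = p + 2 from rfl]
          push_cast
          exact ⟨hu, by linarith⟩
    · -- endpoint for μ^{(i)}
      by_cases hii : i = n
      · rw [muWt_lt n i (n-1) Λ (by omega), hcn]
        have hm := hmono (n-1) (by omega) (by omega)
        rw [hn1] at hm
        linarith
      · rw [muWt_ge n i (n-1) Λ (by omega), hn1, hcn]
        linarith
    · -- pairs for μ^{(i-1)}
      intro p h1 h2
      by_cases hpi : p + 3 ≤ i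
      · obtain ⟨hu, hl⟩ := c1 p h1 (by omega)
        rw [muWt_lt n (i-1) p Λ (by omega), muWt_lt n (i-1) (p+1) Λ (by omega)]
        push_cast
        exact ⟨hu, by linarith⟩
      · by_cases hpi2 : p + 2 = i
        · obtain ⟨hu, hl⟩ := c1 p h1 (by omega)
          have hm := hmono (p+1) (by omega) (by omega)
          rw [show p + 1 + 1 = p + 2 from rfl] at hm
          rw [muWt_lt n (i-1) p Λ (by omega), muWt_ge n (i-1) (p+1) Λ (by omega),
            show p + 1 + 1 = p + 2 from rfl]
          push_cast
          exact ⟨hu, by linarith⟩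
        · obtain ⟨hu, hl⟩ := c2 p (by omega) h2
          rw [muWt_ge n (i-1) p Λ (by omega), muWt_ge n (i-1) (p+1) Λ (by omega),
            show p + 1 + 1 = p + 2 from rfl]
          push_cast
          exact ⟨hu, by linarith⟩
    · -- endpoint for μ^{(i-1)}
      rw [muWt_ge n (i-1) (n-1) Λ (by omega), hn1, hcn]
      linarith
end

section
/- Let Λ_1 > … > Λ_n > |Λ_{n+1}| be half-integers with Λ_p − Λ_{p+1} ∈ ℤ_{>0} and Λ_n + Λ_{n+1} ∈ ℤ_{>0}. Define ρ_m = Σ_{p=1}^{n-1} (n−p) ε_p and for 1 ≤ i ≤ n+1 set μ^{(i)}_p = Λ_p − (n−p) for p < i and μ^{(i)}_p = Λ_{p+1} − (n−p) for i ≤ p ≤ n. Then a tuple γ = (γ_1, …, γ_{n-1}) (entries half-integers of the correct parity) interlaces both μ^{(i)} and μ^{(i-1)} — meaning μ_p ≥ γ_p ≥ μ_{p+1} for p = 1, …, n−1 with the last inequality being μ_{n-1} ≥ γ_{n-1} ≥ μ_n when restricting so(2n)-type weights, i.e. the Spin(2n)↓Spin(2n−1)-style branching condition — for some i ∈ {2,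 …, n+1} if and only if γ satisfies: Λ_p − n + p ≥ γ_p ≥ Λ_{p+1} − n + p + 1 for p = 1, …, i−2; Λ_{p+1} − n + p ≥ γ_p ≥ Λ_{p+2} − n + p + 1 for p = i−1, …, n−2; and Λ_n − 1 ≥ γ_{n-1} ≥ |Λ_{n+1}| when i ≤ n. -/
/-- The highest weight `μ_{0,k}` (1-indexed, with `ρ_m = Σ_{p} (n−p) ε_p` subtracted)
of the `M = Spin(2n)`-representation `δ_{0,k}` in the principal series of
`Spin(2n+1,1)`: `μ^{(k)}_p = Λ_p − (n−p)` for `p < k`, `Λ_{p+1} − (n−p)` for `p ≥ k`. -/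
noncomputable def muWtOdd (n : ℕ) (Λ : ℕ → ℝ) (k : ℕ) : ℕ → ℝ :=
  fun p => if p < k then Λ p - ((n:ℝ) - p) else Λ (p+1) - ((n:ℝ) - p)

/-- The `Spin(2n) ↓ Spin(2n−1)` branching condition: the `Spin(2n−1)`-weight `γ`
(with `n−1` entries) interlaces the `Spin(2n)`-weight `μ` (with `n` entries):
`μ_p ≥ γ_p ≥ μ_{p+1}` for `p ≤ n−2`, `μ_{n-1} ≥ γ_{n-1} ≥ |μ_n|`, and `μ_p − γ_p ∈ ℤ`. -/
def InterlacesEven (n : ℕ) (μ γ : ℕ → ℝ) : Prop :=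
  (∀ p, 1 ≤ p → p ≤ n - 2 → μ p ≥ γ p ∧ γ p ≥ μ (p+1)) ∧
  μ (n-1) ≥ γ (n-1) ∧ γ (n-1) ≥ |μ n| ∧
  (∀ p, 1 ≤ p → p ≤ n - 1 → ∃ z : ℤ, μ p - γ p = z)

/-- Combinatorial content of Proposition 3.4 / Theorem 1.2(1) for `Spin(2n+1,1)`:
`σ_γ` embeds in both `δ_{0,i}|_{M^η}` and `δ_{0,i-1}|_{M^η}` — i.e. `γ` interlaces
both `μ^{(i)}` and `μ^{(i-1)}` — if and only if `γ` satisfies condition (1.6). -/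
theorem interlace_iff_condition_odd (n : ℕ) (hn : 2 ≤ n) (Λ : ℕ → ℝ)
    (hhalf : ∀ p, 1 ≤ p → p ≤ n + 1 → ∃ z : ℤ, 2 * Λ p = z)
    (hgap : ∀ p, 1 ≤ p → p ≤ n → ∃ z : ℤ, Λ p - Λ (p+1) = z ∧ (0:ℝ) < z)
    (hsum : ∃ z : ℤ, Λ n + Λ (n+1) = z ∧ (0:ℝ) < z)
    (habs : |Λ (n+1)| < Λ n)
    (γ : ℕ → ℝ) (hγ : ∀ p, 1 ≤ p → p ≤ n - 1 → ∃ z : ℤ, γ p - Λ 1 = z)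
    (i : ℕ) (hi : 2 ≤ i) (hin : i ≤ n + 1) :
    (InterlacesEven n (muWtOdd n Λ i) γ ∧ InterlacesEven n (muWtOdd n Λ (i-1)) γ) ↔
    ((∀ p, 1 ≤ p → p ≤ i - 2 →
        Λ p - n + p ≥ γ p ∧ γ p ≥ Λ (p+1) - n + p + 1) ∧
     (∀ p, i - 1 ≤ p → p ≤ n - 2 →
        Λ (p+1) - n + p ≥ γ p ∧ γ p ≥ Λ (p+2) - n + p + 1) ∧
     (i ≤ n → Λ n - 1 ≥ γ (n-1) ∧ γ (n-1) ≥ |Λ (n+1)|)) := by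
  have hn1 : n - 1 + 1 = n := by omega
  have hc1 : ((n-1 : ℕ) : ℝ) = (n:ℝ) - 1 := by
    rw [Nat.cast_sub (by omega)]; norm_num
  have step : ∀ q, 1 ≤ q → q ≤ n → Λ (q+1) ≤ Λ q := by
    intro q h1 h2
    obtain ⟨z, hz, hzpos⟩ := hgap q h1 h2
    linarith
  have hΛn : 0 < Λ n := lt_of_le_of_lt (abs_nonneg _) habs
  have idiff : ∀ q, 1 ≤ q → q ≤ n+1 → ∃ z : ℤ, Λ 1 - Λ q = z := by
    intro q h1 h2
    induction q, h1 using Nat.le_induction with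
    | base => exact ⟨0, by simp⟩
    | succ q hq ih =>
      obtain ⟨a, ha⟩ := ih (by omega)
      obtain ⟨b, hb, _⟩ := hgap q hq (by omega)
      exact ⟨a + b, by push_cast; linarith⟩
  have mlt : ∀ k p, p < k → muWtOdd n Λ k p = Λ p - (n:ℝ) + p := by
    intro k p h; simp only [muWtOdd, if_pos h]; ring
  have mge : ∀ k p, k ≤ p → muWtOdd n Λ k p = Λ (p+1) - (n:ℝ) + p := by
    intro k p h; simp only [muWtOdd, if_neg (Nat.not_lt.mpr h)]; ring
  have ints : ∀ k p, 1 ≤ p → p ≤ n-1 → ∃ z : ℤ, muWtOdd n Λ k p - γ p = z := by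
    intro k p h1 h2
    obtain ⟨b, hb⟩ := hγ p h1 h2
    by_cases hpk : p < k
    · obtain ⟨a, ha⟩ := idiff p h1 (by omega)
      refine ⟨-a - b + (p : ℤ) - n, ?_⟩
      rw [mlt k p hpk]; push_cast; linarith
    · obtain ⟨a, ha⟩ := idiff (p+1) (by omega) (by omega)
      refine ⟨-a - b + (p : ℤ) - n, ?_⟩
      rw [mge k p (by omega)]; push_cast; linarith
  constructor
  · rintro ⟨⟨H1, Hu1, Hl1, _⟩, ⟨H2, Hu2, Hl2, _⟩⟩
    refine ⟨?_, ?_, ?_⟩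
    · -- clause A
      intro p hp1 hp2
      by_cases hpn : p ≤ n - 2
      · obtain ⟨hu, hl⟩ := H1 p hp1 hpn
        rw [mlt i p (by omega)] at hu
        rw [mlt i (p+1) (by omega)] at hl
        push_cast at hl
        exact ⟨by linarith, by linarith⟩
      · have hp : p = n - 1 := by omega
        have hi' : i = n + 1 := by omega
        subst hp
        rw [mlt i (n-1) (by omega)] at Hu1
        rw [mlt i n (by omega)] at Hl1
        have hr : Λ n - (n:ℝ) + n = Λ n := by ring
        rw [hr, abs_of_pos hΛn] at Hl1
        constructor
        · linarith
        · rw [hn1, hc1]; linarith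
    · -- clause B
      intro p hp1' hp2'
      obtain ⟨hu1, hl1⟩ := H1 p (by omega) hp2'
      obtain ⟨hu2, hl2⟩ := H2 p (by omega) hp2'
      rw [mge (i-1) p (by omega)] at hu2
      rw [mge i (p+1) (by omega)] at hl1
      push_cast at hl1
      have e : p + 1 + 1 = p + 2 := rfl
      rw [e] at hl1
      exact ⟨by linarith, by linarith⟩
    · -- clause C
      intro hiN
      rw [mge (i-1) (n-1) (by omega), hn1, hc1] at Hu2
      rw [mge i n (by omega)] at Hl1
      have hr : Λ (n+1) - (n:ℝ) + n = Λ (n+1) := by ring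
      rw [hr] at Hl1
      exact ⟨by linarith, Hl1⟩
  · rintro ⟨A, B, C⟩
    refine ⟨⟨?_, ?_, ?_, fun p h1 h2 => ints i p h1 h2⟩,
            ⟨?_, ?_, ?_, fun p h1 h2 => ints (i-1) p h1 h2⟩⟩
    · -- μ^{(i)} middle
      intro p hp1 hp2
      constructor
      · by_cases hA : p ≤ i - 2
        · rw [mlt i p (by omega)]
          exact (A p hp1 hA).1
        · by_cases hB : i ≤ p
          · rw [mge i p hB]
            exact (B p (by omega) hp2).1
          · -- p = i - 1
            rw [mlt i p (by omega)]
            have hs := step p hp1 (by omega)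
            have hb := (B p (by omega) hp2).1
            linarith
      · by_cases hA : p ≤ i - 2
        · rw [mlt i (p+1) (by omega)]
          have := (A p hp1 hA).2
          push_cast
          linarith
        · rw [mge i (p+1) (by omega)]
          have := (B p (by omega) hp2).2
          have e : p + 1 + 1 = p + 2 := rfl
          rw [e]
          push_cast
          linarith
    · -- μ^{(i)} upper last
      by_cases hiN : i ≤ n
      · have hc := (C hiN).1
        by_cases h : n - 1 < i
        · rw [mlt i (n-1) h, hc1]
          have hs := step (n-1) (by omega) (by omega)
          rw [hn1] at hs
          linarith
        · rw [mge i (n-1) (by omega), hn1, hc1]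
          linarith
      · rw [mlt i (n-1) (by omega)]
        exact (A (n-1) (by omega) (by omega)).1
    · -- μ^{(i)} lower last
      by_cases hiN : i ≤ n
      · rw [mge i n (by omega)]
        have hr : Λ (n+1) - (n:ℝ) + n = Λ (n+1) := by ring
        rw [hr]
        exact (C hiN).2
      · rw [mlt i n (by omega)]
        have hr : Λ n - (n:ℝ) + n = Λ n := by ring
        rw [hr, abs_of_pos hΛn]
        have h2 := (A (n-1) (by omega) (by omega)).2
        rw [hn1, hc1] at h2
        linarith
    · -- μ^{(i-1)} middle
      intro p hp1 hp2
      constructor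
      · by_cases hA : p ≤ i - 2
        · rw [mlt (i-1) p (by omega)]
          exact (A p hp1 hA).1
        · rw [mge (i-1) p (by omega)]
          exact (B p (by omega) hp2).1
      · by_cases hA : p + 1 < i - 1
        · rw [mlt (i-1) (p+1) hA]
          have := (A p hp1 (by omega)).2
          push_cast
          linarith
        · rw [mge (i-1) (p+1) (by omega)]
          by_cases hB : i - 1 ≤ p
          · have := (B p hB hp2).2
            have e : p + 1 + 1 = p + 2 := rfl
            rw [e]
            push_cast
            linarith
          · -- p = i - 2
            have hs := step (p+1) (by omega) (by omega)
            have hA' := (A p hp1 (by omega)).2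
            push_cast
            linarith
    · -- μ^{(i-1)} upper last
      by_cases hiN : i ≤ n
      · rw [mge (i-1) (n-1) (by omega), hn1, hc1]
        have := (C hiN).1
        linarith
      · rw [mlt (i-1) (n-1) (by omega)]
        exact (A (n-1) (by omega) (by omega)).1
    · -- μ^{(i-1)} lower last
      by_cases hiN : i ≤ n
      · rw [mge (i-1) n (by omega)]
        have hr : Λ (n+1) - (n:ℝ) + n = Λ (n+1) := by ring
        rw [hr]
        exact (C hiN).2
      · rw [mge (i-1) n (by omega)]
        have hr : Λ (n+1) - (n:ℝ) + n = Λ (n+1) := by ring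
        rw [hr]
        have h2 := (A (n-1) (by omega) (by omega)).2
        rw [hn1, hc1] at h2
        have := abs_nonneg (Λ (n+1))
        linarith
end
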